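/- Let Q ≥ 1 be an integer, let X be a Gamma(Q,1)-distributed real random variable and Y an Exp(1)-distributed real random variable, with X and Y independent. Then for every t > 0, the probability that X·Y ≤ t equals 1 − (2/Γ(Q))·t^{Q/2}·K_Q(2√t). -/

import Mathlib

open MeasureTheory ProbabilityTheory

/-- The modified Bessel function of the second kind, via its integral representation
`K_ν(x) = ∫₀^∞ exp(−x cosh t) cosh(ν t) dt`. -/
noncomputable def besselK (ν x : ℝ) : ℝ :=
  ∫ t in Set.Ioi (0 : ℝ), Real.exp (-x * Real.cosh t) * Real.cosh (ν * t)

open Real Set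


lemma sq_div_eight_le_cosh (u : ℝ) : u ^ 2 / 8 ≤ Real.cosh u := by
  have h1 : Real.exp |u| / 2 ≤ Real.cosh u := by
    rw [← Real.cosh_abs, Real.cosh_eq]
    have := (Real.exp_pos (-|u|)).le
    linarith
  have h2 : (1 + |u| / 2) ^ 2 ≤ Real.exp |u| := by
    have h3 := Real.add_one_le_exp (|u| / 2)
    have h4 : Real.exp (|u| / 2) ^ 2 = Real.exp |u| := by
      rw [← Real.exp_nat_mul]; norm_num; ring_nf
    nlinarith [abs_nonneg u, (Real.exp_pos (|u| / 2)).le]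
  nlinarith [abs_nonneg u, sq_abs u]

lemma integrable_exp_lin_cosh (ν c : ℝ) (hc : 0 < c) :
    Integrable (fun u : ℝ => Real.exp (ν * u - c * Real.cosh u)) := by
  set a := 4 * ν / c with ha
  have key : ∀ u : ℝ, ν * u - c * (u ^ 2 / 8) = 2 * ν ^ 2 / c - c / 8 * (u - a) ^ 2 := by
    intro u; rw [ha]; field_simp; ring
  have hg : Integrable (fun u : ℝ =>
      Real.exp (2 * ν ^ 2 / c) * Real.exp (-(c / 8) * (u - a) ^ 2)) :=
    ((integrable_exp_neg_mul_sq (b := c / 8) (by positivity)).comp_sub_right a).const_mul _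
  refine hg.mono' (Continuous.aestronglyMeasurable (by continuity)) ?_
  filter_upwards with u
  rw [Real.norm_eq_abs, abs_of_nonneg (Real.exp_pos _).le, ← Real.exp_add, Real.exp_le_exp]
  have hch := mul_le_mul_of_nonneg_left (sq_div_eight_le_cosh u) hc.le
  have := key u
  nlinarith

lemma core (ν t : ℝ) (ht : 0 < t) :
    IntegrableOn (fun x => x ^ (ν - 1) * Real.exp (-x - t / x)) (Ioi 0) ∧
    ∫ x in Ioi 0, x ^ (ν - 1) * Real.exp (-x - t / x)
      = 2 * t ^ (ν / 2) * besselK ν (2 * Real.sqrt t) := by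
  set s0 := Real.sqrt t with hs0def
  have hs0 : 0 < s0 := Real.sqrt_pos.mpr ht
  set c := 2 * s0 with hcdef
  have hc : 0 < c := by positivity
  set g : ℝ → ℝ := fun x => x ^ (ν - 1) * Real.exp (-x - t / x) with hg
  set f : ℝ → ℝ := fun u => s0 * Real.exp u with hf
  have hf' : ∀ u ∈ (univ : Set ℝ), HasDerivWithinAt f (s0 * Real.exp u) univ u :=
    fun u _ => ((Real.hasDerivAt_exp u).const_mul s0).hasDerivWithinAt
  have hinj : InjOn f univ := by
    intro u _ v _ h
    exact Real.exp_injective (mul_left_cancel₀ hs0.ne' h)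
  have himg : f '' univ = Ioi 0 := by
    ext x
    simp only [image_univ, mem_range, mem_Ioi, hf]
    constructor
    · rintro ⟨u, rfl⟩; positivity
    · intro hx
      exact ⟨Real.log (x / s0), by
        rw [Real.exp_log (by positivity)]
        field_simp⟩
  have heq : (fun u => |s0 * Real.exp u| • g (f u))
      = fun u => t ^ (ν / 2) * Real.exp (ν * u - c * Real.cosh u) := by
    funext u
    have hfu : 0 < f u := by simp only [hf]; positivity
    have h1 : |s0 * Real.exp u| = s0 * Real.exp u := abs_of_pos (by positivity)
    have h2 : (f u) ^ (ν - 1) = t ^ ((ν - 1) / 2) * Real.exp (u * (ν - 1)) := by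
      rw [hf]
      rw [Real.mul_rpow hs0.le (Real.exp_pos u).le,
        Real.rpow_def_of_pos (Real.exp_pos u), Real.log_exp, hs0def,
        Real.sqrt_eq_rpow, ← Real.rpow_mul ht.le]
      congr 1
      ring
    have h3 : t / f u = s0 * Real.exp (-u) := by
      rw [hf, ← Real.mul_self_sqrt ht.le, ← hs0def, Real.exp_neg]
      field_simp
    have h4 : -(f u) - t / f u = -(c * Real.cosh u) := by
      rw [h3, hf, hcdef, Real.cosh_eq]; ring
    simp only [smul_eq_mul, hg, h1, h2, h4]
    have h5 : s0 * t ^ ((ν - 1) / 2) = t ^ (ν / 2) := by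
      rw [hs0def, Real.sqrt_eq_rpow, ← Real.rpow_add ht]
      congr 1
      ring
    have he : Real.exp u * (Real.exp (u * (ν - 1)) * Real.exp (-(c * Real.cosh u)))
        = Real.exp (ν * u - c * Real.cosh u) := by
      rw [← Real.exp_add, ← Real.exp_add]; congr 1; ring
    calc s0 * Real.exp u * (t ^ ((ν - 1) / 2) * Real.exp (u * (ν - 1)) * Real.exp (-(c * Real.cosh u)))
        = s0 * t ^ ((ν - 1) / 2)
            * (Real.exp u * (Real.exp (u * (ν - 1)) * Real.exp (-(c * Real.cosh u)))) := by ring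
      _ = t ^ (ν / 2) * Real.exp (ν * u - c * Real.cosh u) := by rw [he, h5]
  have hI : Integrable (fun u : ℝ => Real.exp (ν * u - c * Real.cosh u)) :=
    integrable_exp_lin_cosh ν c hc
  have hI' : Integrable (fun u : ℝ => Real.exp (-(ν * u) - c * Real.cosh u)) := by
    have := integrable_exp_lin_cosh (-ν) c hc
    simpa [neg_mul] using this
  constructor
  · rw [← himg, integrableOn_image_iff_integrableOn_abs_deriv_smul MeasurableSet.univ hf' hinj g,
      heq, integrableOn_univ]
    exact hI.const_mul _
  · have hsub := integral_image_eq_integral_abs_deriv_smul MeasurableSet.univ hf' hinj g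
    rw [himg, heq, Measure.restrict_univ] at hsub
    rw [hsub, integral_const_mul]
    have hJ : (∫ u : ℝ, Real.exp (ν * u - c * Real.cosh u)) = 2 * besselK ν c := by
      rw [← intervalIntegral.integral_Iic_add_Ioi (b := 0) hI.integrableOn hI.integrableOn]
      have hneg : (∫ u in Iic (0:ℝ), Real.exp (ν * u - c * Real.cosh u))
          = ∫ u in Ioi (0:ℝ), Real.exp (-(ν * u) - c * Real.cosh u) := by
        have h := integral_comp_neg_Ioi (0 : ℝ) (fun u => Real.exp (ν * u - c * Real.cosh u))
        simp only [neg_zero, Real.cosh_neg, mul_neg] at h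
        exact h.symm
      rw [hneg, ← integral_add hI'.integrableOn hI.integrableOn]
      have : (fun u => Real.exp (-(ν * u) - c * Real.cosh u)
            + Real.exp (ν * u - c * Real.cosh u))
          = fun u => 2 * (Real.exp (-c * Real.cosh u) * Real.cosh (ν * u)) := by
        funext u
        rw [Real.cosh_eq (ν * u), sub_eq_add_neg, sub_eq_add_neg, Real.exp_add, Real.exp_add,
          neg_mul c, Real.exp_neg (ν * u)]
        ring
      rw [this, integral_const_mul, besselK]
    rw [hJ]; ring

lemma expMeasure_Ioi {a : ℝ} (ha : 0 ≤ a) :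
    expMeasure 1 (Ioi a) = ENNReal.ofReal (Real.exp (-a)) := by
  rw [expMeasure, gammaMeasure, withDensity_apply _ measurableSet_Ioi]
  have hcong : ∀ y ∈ Ioi a, gammaPDF 1 1 y = ENNReal.ofReal (Real.exp (-y)) := by
    intro y hy
    rw [gammaPDF_of_nonneg (le_trans ha (le_of_lt hy))]
    norm_num [Real.Gamma_one]
  rw [setLIntegral_congr_fun measurableSet_Ioi hcong]
  have hint : IntegrableOn (fun x => Real.exp (-x)) (Ioi a) := by
    simpa using exp_neg_integrableOn_Ioi a zero_lt_one
  rw [← ofReal_integral_eq_lintegral_ofReal hint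
      (ae_of_all _ fun x => (Real.exp_pos _).le), integral_exp_neg_Ioi]

theorem stmt_4 (Q : ℕ) (hQ : 1 ≤ Q)
    {Ω : Type*} [MeasureSpace Ω] [IsProbabilityMeasure (ℙ : Measure Ω)]
    (X Y : Ω → ℝ)
    (hX : Measure.map X ℙ = gammaMeasure Q 1)
    (hY : Measure.map Y ℙ = expMeasure 1)
    (hXY : IndepFun X Y)
    (t : ℝ) (ht : 0 < t) :
    (ℙ {ω | X ω * Y ω ≤ t}).toReal =
      1 - (2 / Real.Gamma Q) * t ^ ((Q : ℝ) / 2) * besselK Q (2 * Real.sqrt t) := by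
  have hQpos : (0 : ℝ) < (Q : ℝ) := by exact_mod_cast hQ
  haveI hμP : IsProbabilityMeasure (gammaMeasure Q 1) :=
    isProbabilityMeasure_gammaMeasure hQpos one_pos
  haveI hνP : IsProbabilityMeasure (expMeasure 1) :=
    isProbabilityMeasure_gammaMeasure one_pos one_pos
  -- a.e.-measurability of X, Y
  have hXm : AEMeasurable X ℙ := by
    by_contra h
    have h1 : (gammaMeasure Q 1) univ = 1 := measure_univ
    rw [← hX, Measure.map_of_not_aemeasurable h] at h1
    simp at h1
  have hYm : AEMeasurable Y ℙ := by
    by_contra h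
    have h1 : (expMeasure 1) univ = 1 := measure_univ
    rw [← hY, Measure.map_of_not_aemeasurable h] at h1
    simp at h1
  have hpair : AEMeasurable (fun ω => (X ω, Y ω)) ℙ := hXm.prodMk hYm
  have hprod : Measure.map (fun ω => (X ω, Y ω)) ℙ
      = (gammaMeasure Q 1).prod (expMeasure 1) := by
    rw [← hX, ← hY]
    exact (indepFun_iff_map_prod_eq_prod_map_map hXm hYm).mp hXY
  set S : Set (ℝ × ℝ) := {p : ℝ × ℝ | t < p.1 * p.2} with hSdef
  have hSm : MeasurableSet S :=
    measurableSet_lt measurable_const (measurable_fst.mul measurable_snd)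
  -- the real integral
  set I : ℝ := ∫ x in Ioi (0:ℝ), gammaPDFReal Q 1 x * Real.exp (-(t / x)) with hIdef
  have hcongr : ∀ x ∈ Ioi (0:ℝ), gammaPDFReal Q 1 x * Real.exp (-(t / x))
      = (1 / Real.Gamma Q) * (x ^ ((Q:ℝ) - 1) * Real.exp (-x - t / x)) := by
    intro x hx
    rw [gammaPDFReal, if_pos (le_of_lt hx), Real.one_rpow,
      show -x - t / x = -(1 * x) + -(t / x) by ring, Real.exp_add]
    ring
  have hIOn : IntegrableOn (fun x => gammaPDFReal Q 1 x * Real.exp (-(t / x))) (Ioi 0) := by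
    have h0 : IntegrableOn
        (fun x => (1 / Real.Gamma Q) * (x ^ ((Q:ℝ) - 1) * Real.exp (-x - t / x))) (Ioi 0) :=
      (core (Q:ℝ) t ht).1.const_mul _
    exact h0.congr_fun (fun x hx => (hcongr x hx).symm) measurableSet_Ioi
  have hInonneg : 0 ≤ I :=
    setIntegral_nonneg measurableSet_Ioi fun x hx => by
      have := gammaPDFReal_nonneg (a := (Q:ℝ)) (r := 1) hQpos one_pos x
      positivity
  have hIval : I = (2 / Real.Gamma Q) * t ^ ((Q:ℝ) / 2) * besselK Q (2 * Real.sqrt t) := by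
    rw [hIdef, setIntegral_congr_fun measurableSet_Ioi hcongr, integral_const_mul,
      (core (Q:ℝ) t ht).2]
    ring
  -- measure of S
  have hmeasS : ((gammaMeasure Q 1).prod (expMeasure 1)) S = ENNReal.ofReal I := by
    rw [Measure.prod_apply hSm]
    have hmg : Measurable (gammaPDF (Q:ℝ) 1) := (measurable_gammaPDFReal _ _).ennreal_ofReal
    rw [gammaMeasure,
      lintegral_withDensity_eq_lintegral_mul _ hmg
        (measurable_measure_prodMk_left (ν := expMeasure 1) hSm)]
    have hsplit : ∫⁻ x, (gammaPDF Q 1 * fun x => expMeasure 1 (Prod.mk x ⁻¹' S)) x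
        = ∫⁻ x in Ioi 0, (gammaPDF Q 1 * fun x => expMeasure 1 (Prod.mk x ⁻¹' S)) x := by
      rw [← lintegral_add_compl _ (measurableSet_Ioi (a := (0:ℝ))), compl_Ioi]
      have hzero : ∫⁻ x in Iic (0:ℝ),
          (gammaPDF Q 1 * fun x => expMeasure 1 (Prod.mk x ⁻¹' S)) x = 0 := by
        rw [Measure.restrict_congr_set Iio_ae_eq_Iic.symm,
          setLIntegral_congr_fun (g := fun _ => (0 : ENNReal)) measurableSet_Iio
            (fun x (hx : x < 0) => by simp [gammaPDF_of_neg hx]),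
          lintegral_zero]
      rw [hzero, add_zero]
    rw [hsplit]
    have hptwise : ∀ x ∈ Ioi (0:ℝ),
        (gammaPDF Q 1 * fun x => expMeasure 1 (Prod.mk x ⁻¹' S)) x
          = ENNReal.ofReal (gammaPDFReal Q 1 x * Real.exp (-(t / x))) := by
      intro x hx
      have hx0 : (0:ℝ) < x := hx
      have hset : Prod.mk x ⁻¹' S = Ioi (t / x) := by
        ext y
        simp only [hSdef, mem_preimage, mem_setOf_eq, mem_Ioi]
        rw [div_lt_iff₀ hx0, mul_comm]
      simp only [Pi.mul_apply]
      rw [hset, expMeasure_Ioi (by positivity), gammaPDF,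
        ← ENNReal.ofReal_mul (gammaPDFReal_nonneg hQpos one_pos x)]
    rw [setLIntegral_congr_fun measurableSet_Ioi hptwise,
      ← ofReal_integral_eq_lintegral_ofReal hIOn
        (ae_restrict_of_ae (ae_of_all _ fun x => by
          have := gammaPDFReal_nonneg (a := (Q:ℝ)) (r := 1) hQpos one_pos x
          positivity))]
  -- assemble
  have hsetEq : {ω | X ω * Y ω ≤ t} = (fun ω => (X ω, Y ω)) ⁻¹' Sᶜ := by
    ext ω
    simp [hSdef, not_lt]
  rw [hsetEq, ← Measure.map_apply_of_aemeasurable hpair hSm.compl, hprod,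
    measure_compl hSm (measure_ne_top _ _), measure_univ, hmeasS]
  have hle : ENNReal.ofReal I ≤ 1 := by
    rw [← hmeasS]; exact prob_le_one
  rw [ENNReal.toReal_sub_of_le hle ENNReal.one_ne_top, ENNReal.toReal_one,
    ENNReal.toReal_ofReal hInonneg, hIval]
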